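/- For every integer l ≥ 1 and every real r ≥ 1, the number of tuples (n_1,...,n_l) of integers with each n_j ≥ 2 and n_1·n_2·…·n_l ≤ r is at most r·(log r)^{l-1}/(l-1)!. -/

import Mathlib

open Filter Real Set

/-- `A N l r` is the number of tuples `(n_1, ..., n_l)` of natural numbers
with each `n_j ≥ N` and `n_1 ⋯ n_l ≤ r`. -/
noncomputable def A (N l : ℕ) (r : ℝ) : ℕ :=
  {x : Fin l → ℕ | (∀ j, N ≤ x j) ∧ ((∏ j, x j : ℕ) : ℝ) ≤ r}.ncard

lemma pow_telescope (m : ℕ) {a b : ℝ} (hb : 0 ≤ b) (hab : b ≤ a) :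
    (m + 1 : ℝ) * (a - b) * b ^ m ≤ a ^ (m + 1) - b ^ (m + 1) := by
  induction m with
  | zero => simp
  | succ m ih =>
    have ha : 0 ≤ a := hb.trans hab
    have hbm : 0 ≤ b ^ m := pow_nonneg hb m
    have hcoef : (0:ℝ) ≤ ((m:ℝ) + 1) * (a - b) * b ^ m :=
      mul_nonneg (mul_nonneg (by positivity) (by linarith)) hbm
    have h3 : ((m:ℝ)+1)*(a-b)*b^m * b ≤ ((m:ℝ)+1)*(a-b)*b^m * a :=
      mul_le_mul_of_nonneg_left hab hcoef
    have h1 : (((m:ℝ)+1)*(a-b)*b^m) * a ≤ (a ^ (m+1) - b ^ (m+1)) * a :=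
      mul_le_mul_of_nonneg_right ih ha
    calc ((m+1:ℕ)+1 : ℝ) * (a - b) * b ^ (m+1)
        = ((m:ℝ)+1)*(a-b)*b^m * b + (a-b)*b^(m+1) := by push_cast; rw [pow_succ]; ring
      _ ≤ ((m:ℝ)+1)*(a-b)*b^m * a + (a-b)*b^(m+1) := by linarith
      _ ≤ (a ^ (m+1) - b ^ (m+1)) * a + (a-b)*b^(m+1) := by linarith
      _ = a ^ (m+1+1) - b ^ (m+1+1) := by rw [pow_succ a, pow_succ b]; ring

lemma sum_log (m : ℕ) (r : ℝ) (hr : 1 ≤ r) :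
    ∑ n ∈ Finset.Icc 2 ⌊r⌋₊, (1/(n:ℝ)) * (Real.log (r/n))^m
      ≤ (Real.log r)^(m+1) / (m+1) := by
  have hr0 : (0:ℝ) < r := by linarith
  have hlogr : 0 ≤ Real.log r := Real.log_nonneg hr
  set M := ⌊r⌋₊ with hM
  by_cases hM2 : M < 2
  · rw [Finset.Icc_eq_empty (by omega)]
    simp only [Finset.sum_empty]
    positivity
  push_neg at hM2
  have hMr : (M:ℝ) ≤ r := Nat.floor_le (by linarith)
  set g : ℕ → ℝ := fun k => (Real.log (r/k))^(m+1) with hg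
  have hstep : ∀ n ∈ Finset.Icc 2 M,
      (1/(n:ℝ)) * (Real.log (r/n))^m ≤ (g (n-1) - g n) / (m+1) := by
    intro n hn
    rw [Finset.mem_Icc] at hn
    obtain ⟨hn2, hnM⟩ := hn
    have hn2' : (2:ℝ) ≤ (n:ℝ) := by exact_mod_cast hn2
    have hn0 : (0:ℝ) < n := by linarith
    have hnr : (n:ℝ) ≤ r := le_trans (by exact_mod_cast Nat.cast_le.mpr hnM) hMr
    have hcast : ((n-1:ℕ):ℝ) = (n:ℝ) - 1 := by
      have : 1 ≤ n := by omega
      push_cast [this]; ring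
    set c : ℝ := (n:ℝ) - 1 with hc
    have hc1 : (1:ℝ) ≤ c := by simp [hc]; linarith
    have hc0 : (0:ℝ) < c := by linarith
    set b : ℝ := Real.log (r/n) with hb'
    set a : ℝ := Real.log (r/c) with ha'
    have hb : 0 ≤ b := Real.log_nonneg ((one_le_div hn0).mpr hnr)
    have hlb : b = Real.log r - Real.log n := Real.log_div (by positivity) (by positivity)
    have hla : a = Real.log r - Real.log c := Real.log_div (by positivity) (by positivity)
    have hln : Real.log (c/(n:ℝ)) ≤ c/(n:ℝ) - 1 := Real.log_le_sub_one_of_pos (by positivity)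
    have hlcn : Real.log (c/(n:ℝ)) = Real.log c - Real.log n :=
      Real.log_div (by positivity) (by positivity)
    have hfrac : c/(n:ℝ) - 1 = -(1/(n:ℝ)) := by
      field_simp [hc]
      linarith
    have h1n : 1/(n:ℝ) ≤ a - b := by
      rw [hla, hlb]
      rw [hlcn, hfrac] at hln
      linarith
    have hab : b ≤ a := by
      have : (0:ℝ) < 1/(n:ℝ) := by positivity
      linarith
    have hpow := pow_telescope m hb hab
    have hbm : 0 ≤ b ^ m := pow_nonneg hb m
    have h2 : (1/(n:ℝ)) * b^m ≤ (a-b) * b^m := mul_le_mul_of_nonneg_right h1n hbm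
    have hm1 : (0:ℝ) < (m:ℝ) + 1 := by positivity
    rw [le_div_iff₀ hm1]
    have hgn1 : g (n-1) = a ^ (m+1) := by
      rw [hg]; simp only; rw [hcast]
    have hgn : g n = b ^ (m+1) := rfl
    rw [hgn1, hgn]
    calc (1/(n:ℝ)) * b^m * ((m:ℝ)+1) = ((m:ℝ)+1) * ((1/(n:ℝ)) * b^m) := by ring
      _ ≤ ((m:ℝ)+1) * ((a-b) * b^m) := by
          exact mul_le_mul_of_nonneg_left h2 (by positivity)
      _ = ((m:ℝ)+1) * (a-b) * b^m := by ring
      _ ≤ a ^ (m+1) - b ^ (m+1) := hpow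
  have htel : ∑ n ∈ Finset.Icc 2 M, (g (n-1) - g n) = g 1 - g M := by
    have h1 : Finset.Icc 2 M = Finset.Ico 2 (M+1) := by
      rw [Finset.Ico_add_one_right_eq_Icc]
    rw [h1, Finset.sum_Ico_eq_sum_range]
    have h2 : M + 1 - 2 = M - 1 := by omega
    rw [h2]
    have h3 : ∀ i, g (2 + i - 1) - g (2 + i) = (fun j => g (j+1)) i - (fun j => g (j+1)) (i+1) := by
      intro i
      have e1 : 2 + i - 1 = i + 1 := by omega
      have e2 : 2 + i = (i + 1) + 1 := by omega
      rw [e1, e2]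
    rw [Finset.sum_congr rfl (fun i _ => h3 i), Finset.sum_range_sub' (fun j => g (j+1)) (M-1)]
    have e4 : M - 1 + 1 = M := by omega
    simp only [e4]
  have hgM : 0 ≤ g M := by
    have hM0 : (0:ℝ) < M := by exact_mod_cast (by omega : 0 < M)
    exact pow_nonneg (Real.log_nonneg ((one_le_div hM0).mpr hMr)) _
  have hg1 : g 1 = (Real.log r)^(m+1) := by simp [hg]
  calc ∑ n ∈ Finset.Icc 2 M, (1/(n:ℝ)) * (Real.log (r/n))^m
      ≤ ∑ n ∈ Finset.Icc 2 M, (g (n-1) - g n) / (m+1) := Finset.sum_le_sum hstep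
    _ = (∑ n ∈ Finset.Icc 2 M, (g (n-1) - g n)) / (m+1) := by rw [Finset.sum_div]
    _ = (g 1 - g M) / (m+1) := by rw [htel]
    _ ≤ g 1 / (m+1) := by
        gcongr
        linarith
    _ = (Real.log r)^(m+1) / (m+1) := by rw [hg1]

lemma S_finite (l : ℕ) (r : ℝ) :
    {x : Fin l → ℕ | (∀ j, 2 ≤ x j) ∧ ((∏ j, x j : ℕ) : ℝ) ≤ r}.Finite := by
  apply Set.Finite.subset (Set.finite_Icc (fun _ : Fin l => 0) (fun _ => ⌊r⌋₊))
  rintro x ⟨h2, hp⟩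
  refine ⟨fun j => Nat.zero_le _, fun j => ?_⟩
  calc x j ≤ ∏ i, x i :=
        Finset.single_le_prod' (fun i _ => le_trans one_le_two (h2 i)) (Finset.mem_univ j)
  _ ≤ ⌊r⌋₊ := Nat.le_floor hp

lemma A_base (r : ℝ) (hr : 0 ≤ r) : (A 2 1 r : ℝ) ≤ r := by
  have hsub : {x : Fin 1 → ℕ | (∀ j, 2 ≤ x j) ∧ ((∏ j, x j : ℕ) : ℝ) ≤ r}
      ⊆ (fun n => fun _ : Fin 1 => n) '' ((Finset.Icc 2 ⌊r⌋₊ : Finset ℕ) : Set ℕ) := by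
    rintro x ⟨h2, hp⟩
    refine ⟨x 0, ?_, ?_⟩
    · simp only [Finset.coe_Icc, Set.mem_Icc]
      refine ⟨h2 0, ?_⟩
      apply Nat.le_floor
      calc ((x 0 : ℕ) : ℝ) = ((∏ j, x j : ℕ) : ℝ) := by rw [Fin.prod_univ_one]
        _ ≤ r := hp
    · funext j
      have : j = 0 := Subsingleton.elim j 0
      rw [this]
  have h1 : A 2 1 r ≤ ((fun n => fun _ : Fin 1 => n) '' ((Finset.Icc 2 ⌊r⌋₊ : Finset ℕ) : Set ℕ)).ncard := by
    exact Set.ncard_le_ncard hsub (Set.Finite.image _ (Finset.finite_toSet _))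
  have h2 : ((fun n => fun _ : Fin 1 => n) '' ((Finset.Icc 2 ⌊r⌋₊ : Finset ℕ) : Set ℕ)).ncard
      ≤ ((Finset.Icc 2 ⌊r⌋₊ : Finset ℕ) : Set ℕ).ncard :=
    Set.ncard_image_le (Finset.finite_toSet _)
  rw [Set.ncard_coe_finset, Nat.card_Icc] at h2
  have h3 : A 2 1 r ≤ ⌊r⌋₊ := le_trans h1 (le_trans h2 (by omega))
  calc (A 2 1 r : ℝ) ≤ (⌊r⌋₊ : ℝ) := by exact_mod_cast h3
    _ ≤ r := Nat.floor_le hr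

lemma A_rec (l : ℕ) (r : ℝ) :
    A 2 (l+1) r ≤ ∑ n ∈ Finset.Icc 2 ⌊r⌋₊, A 2 l (r / n) := by
  classical
  set S := {x : Fin (l+1) → ℕ | (∀ j, 2 ≤ x j) ∧ ((∏ j, x j : ℕ) : ℝ) ≤ r} with hS
  have hSfin := S_finite (l+1) r
  have hA : A 2 (l+1) r = hSfin.toFinset.card := by
    rw [A, Set.ncard_eq_toFinset_card _ hSfin]
  rw [hA]
  have hmem : ∀ x ∈ hSfin.toFinset, x 0 ∈ Finset.Icc 2 ⌊r⌋₊ := by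
    intro x hx
    rw [Set.Finite.mem_toFinset] at hx
    obtain ⟨h2, hp⟩ := hx
    rw [Finset.mem_Icc]
    refine ⟨h2 0, ?_⟩
    calc x 0 ≤ ∏ i, x i :=
          Finset.single_le_prod' (fun i _ => le_trans one_le_two (h2 i)) (Finset.mem_univ 0)
      _ ≤ ⌊r⌋₊ := Nat.le_floor hp
  rw [Finset.card_eq_sum_card_fiberwise hmem]
  apply Finset.sum_le_sum
  intro n hn
  rw [Finset.mem_Icc] at hn
  have hn0 : (0:ℝ) < n := by
    have : 2 ≤ n := hn.1
    positivity
  set T := {x : Fin l → ℕ | (∀ j, 2 ≤ x j) ∧ ((∏ j, x j : ℕ) : ℝ) ≤ r / n} with hT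
  have hTfin := S_finite l (r / n)
  have hAT : A 2 l (r / n) = hTfin.toFinset.card := by
    rw [A, Set.ncard_eq_toFinset_card _ hTfin]
  rw [hAT]
  apply Finset.card_le_card_of_injOn Fin.tail
  · intro x hx
    simp only [Finset.mem_coe, Finset.mem_filter, Set.Finite.mem_toFinset] at hx ⊢
    obtain ⟨⟨h2, hp⟩, hx0⟩ := hx
    refine ⟨fun j => h2 j.succ, ?_⟩
    have hprod : (∏ j, x j) = x 0 * ∏ j : Fin l, Fin.tail x j := by
      rw [Fin.prod_univ_succ]; rfl
    rw [le_div_iff₀ hn0]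
    calc ((∏ j : Fin l, Fin.tail x j : ℕ) : ℝ) * n
        = ((x 0 * ∏ j : Fin l, Fin.tail x j : ℕ) : ℝ) := by
          rw [hx0]; push_cast; ring
      _ = ((∏ j, x j : ℕ) : ℝ) := by rw [hprod]
      _ ≤ r := hp
  · intro x hx y hy hxy
    rw [Finset.mem_coe, Finset.mem_filter] at hx hy
    have : Fin.cons (x 0) (Fin.tail x) = Fin.cons (y 0) (Fin.tail y) := by
      rw [hx.2, hy.2, hxy]
    rwa [Fin.cons_self_tail, Fin.cons_self_tail] at this

lemma A_main (m : ℕ) : ∀ r : ℝ, 1 ≤ r →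
    (A 2 (m+1) r : ℝ) ≤ r * (Real.log r)^m / (m.factorial : ℝ) := by
  induction m with
  | zero =>
    intro r hr
    simpa using A_base r (by linarith)
  | succ m ih =>
    intro r hr
    have hr0 : (0:ℝ) < r := by linarith
    have hfac : (0:ℝ) < (m.factorial : ℝ) := by exact_mod_cast m.factorial_pos
    have hMr : ((⌊r⌋₊ : ℕ) : ℝ) ≤ r := Nat.floor_le (by linarith)
    calc (A 2 (m+1+1) r : ℝ)
        ≤ ∑ n ∈ Finset.Icc 2 ⌊r⌋₊, (A 2 (m+1) (r/n) : ℝ) := by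
          exact_mod_cast A_rec (m+1) r
      _ ≤ ∑ n ∈ Finset.Icc 2 ⌊r⌋₊, (r/n) * (Real.log (r/n))^m / (m.factorial : ℝ) := by
          apply Finset.sum_le_sum
          intro n hn
          rw [Finset.mem_Icc] at hn
          have hn2 : (2:ℝ) ≤ (n:ℝ) := by exact_mod_cast hn.1
          have hn0 : (0:ℝ) < n := by linarith
          have hnr : (n:ℝ) ≤ r := le_trans (by exact_mod_cast Nat.cast_le.mpr hn.2) hMr
          exact ih (r/n) ((one_le_div hn0).mpr hnr)
      _ = (r / (m.factorial : ℝ)) * ∑ n ∈ Finset.Icc 2 ⌊r⌋₊, (1/(n:ℝ)) * (Real.log (r/n))^m := by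
          rw [Finset.mul_sum]
          apply Finset.sum_congr rfl
          intro n _
          ring
      _ ≤ (r / (m.factorial : ℝ)) * ((Real.log r)^(m+1) / ((m:ℝ)+1)) := by
          apply mul_le_mul_of_nonneg_left (sum_log m r hr) (by positivity)
      _ = r * (Real.log r)^(m+1) / ((m+1).factorial : ℝ) := by
          rw [Nat.factorial_succ]
          push_cast
          rw [div_mul_div_comm, mul_comm (m.factorial:ℝ) ((m:ℝ)+1)]

theorem stmt_0 (l : ℕ) (hl : 1 ≤ l) (r : ℝ) (hr : 1 ≤ r) :
    (A 2 l r : ℝ) ≤ r * (Real.log r) ^ (l - 1) / (Nat.factorial (l - 1)) := by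
  obtain ⟨m, rfl⟩ := Nat.exists_eq_add_of_le hl
  have e : 1 + m - 1 = m := by omega
  rw [e, add_comm 1 m]
  exact A_main m r hr
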